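/- Let f : [a,b] → ℝ be continuous and integrable on [a,b] with 0 ≤ a < b, and suppose f is m-convex on [a,b] for some fixed m ∈ (0,1]. Then for any fixed p, q > 0, ∫_a^b (x-a)^p (b-x)^q f(x) dx ≤ (b-a)^{p+q+1} [β(q+2, p+1) f(a) + m β(q+1, p+2) f(b/m)]. -/

import Mathlib

open Real Set MeasureTheory intervalIntegral

noncomputable def beta (x y : ℝ) : ℝ := ∫ t in (0:ℝ)..1, t ^ (x-1) * (1-t) ^ (y-1)

def MConvexOn (s : Set ℝ) (m : ℝ) (g : ℝ → ℝ) : Prop :=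
  ∀ x ∈ s, ∀ y ∈ s, ∀ t ∈ Set.Icc (0:ℝ) 1, g (t*x + m*(1-t)*y) ≤ t * g x + m*(1-t) * g y

lemma cont_left (a c : ℝ) (hc : 0 < c) (s : Set ℝ) :
    ContinuousOn (fun x : ℝ => (x - a) ^ c) s := by
  apply ContinuousOn.rpow_const (by fun_prop)
  intro x _; right; exact hc.le

lemma cont_right (b c : ℝ) (hc : 0 < c) (s : Set ℝ) :
    ContinuousOn (fun x : ℝ => (b - x) ^ c) s := by
  apply ContinuousOn.rpow_const (by fun_prop)
  intro x _; right; exact hc.le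

lemma key (a b p q : ℝ) (hab : a < b) (hp : 0 < p) (hq : 0 < q) :
    ∫ x in a..b, (x-a)^p * (b-x)^q = (b-a)^(p+q+1) * beta (q+1) (p+1) := by
  have hba : 0 < b - a := by linarith
  have h1 : ∫ t in (0:ℝ)..1, (fun x => (x-a)^p * (b-x)^q) (-(b-a) * t + b)
      = (-(b-a))⁻¹ • ∫ x in (-(b-a))*0 + b..(-(b-a))*1 + b, (x-a)^p * (b-x)^q :=
    intervalIntegral.integral_comp_mul_add (c := -(b-a)) (fun x => (x-a)^p * (b-x)^q) (by intro h; nlinarith) b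
  simp only [mul_zero, zero_add, mul_one] at h1
  have he1 : -(b-a) + b = a := by ring
  rw [he1, intervalIntegral.integral_symm a b, smul_eq_mul] at h1
  have h2 : ∫ t in (0:ℝ)..1, (fun x => (x-a)^p * (b-x)^q) (-(b-a) * t + b)
      = (b-a)^(p+q) * ∫ t in (0:ℝ)..1, t^q * (1-t)^p := by
    rw [← intervalIntegral.integral_const_mul]
    apply intervalIntegral.integral_congr
    intro t ht
    rw [Set.uIcc_of_le (by norm_num : (0:ℝ) ≤ 1)] at ht
    obtain ⟨ht0, ht1⟩ := ht
    simp only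
    have e1 : -(b-a) * t + b - a = (b-a) * (1-t) := by ring
    have e2 : b - (-(b-a) * t + b) = (b-a) * t := by ring
    rw [e1, e2, Real.mul_rpow hba.le (by linarith), Real.mul_rpow hba.le ht0,
      Real.rpow_add hba]
    ring
  rw [h2] at h1
  have hbeta : beta (q+1) (p+1) = ∫ t in (0:ℝ)..1, t^q * (1-t)^p := by
    unfold beta
    norm_num
  rw [hbeta]
  have h3 : ∫ x in a..b, (x-a)^p * (b-x)^q
      = (b-a) * ((b-a)^(p+q) * ∫ t in (0:ℝ)..1, t^q * (1-t)^p) := by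
    rw [h1]
    field_simp [sub_ne_zero.mpr hab.ne]
  rw [h3, Real.rpow_add hba (p+q) 1, Real.rpow_one]
  ring

theorem stmt17 (a b p q : ℝ) (f : ℝ → ℝ)
    (ha : 0 ≤ a) (hab : a < b) (hp : 0 < p) (hq : 0 < q)
    (hcont : ContinuousOn f (Set.Icc a b))
    (hint : IntervalIntegrable f volume a b)
    (m : ℝ) (hm : m ∈ Set.Ioc (0:ℝ) 1)
    (hf : MConvexOn (Set.Icc 0 (b/m)) m f) :
    ∫ x in a..b, (x-a)^p * (b-x)^q * f x
      ≤ (b-a)^(p+q+1) * (beta (q+2) (p+1) * f a + m * beta (q+1) (p+2) * f (b/m)) := by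
  have hba : 0 < b - a := by linarith
  obtain ⟨hm0, hm1⟩ := hm
  have hb : 0 < b := lt_of_le_of_lt ha hab
  have hbm : b ≤ b / m := by
    rw [le_div_iff₀ hm0]; nlinarith
  set A := f a with hA
  set B := f (b/m) with hB
  -- pointwise bound
  have hpt : ∀ x ∈ Icc a b,
      (x-a)^p * (b-x)^q * f x ≤
      A/(b-a) * ((x-a)^p * (b-x)^(q+1)) + (m*B/(b-a)) * ((x-a)^(p+1) * (b-x)^q) := by
    intro x hx
    obtain ⟨hx1, hx2⟩ := hx
    set t := (b-x)/(b-a) with ht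
    have ht0 : 0 ≤ t := div_nonneg (by linarith) hba.le
    have ht1 : t ≤ 1 := by rw [div_le_one hba]; linarith
    have hx' : t*a + m*(1-t)*(b/m) = x := by
      rw [ht]; field_simp; ring
    have hcvx := hf a ⟨ha, by linarith⟩ (b/m) ⟨by positivity, le_refl _⟩ t ⟨ht0, ht1⟩
    rw [hx'] at hcvx
    have hw : 0 ≤ (x-a)^p * (b-x)^q :=
      mul_nonneg (Real.rpow_nonneg (by linarith) _) (Real.rpow_nonneg (by linarith) _)
    calc (x-a)^p * (b-x)^q * f x ≤ (x-a)^p * (b-x)^q * (t * A + m*(1-t) * B) :=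
          mul_le_mul_of_nonneg_left hcvx hw
      _ = A/(b-a) * ((x-a)^p * (b-x)^(q+1)) + (m*B/(b-a)) * ((x-a)^(p+1) * (b-x)^q) := by
          have h1t : 1 - t = (x-a)/(b-a) := by rw [ht]; field_simp; ring
          rw [h1t, ht,
            Real.rpow_add' (by linarith : (0:ℝ) ≤ b - x) (by positivity : q+1 ≠ 0),
            Real.rpow_add' (by linarith : (0:ℝ) ≤ x - a) (by positivity : p+1 ≠ 0),
            Real.rpow_one, Real.rpow_one]
          field_simp
  -- integrability
  have hc1 : ContinuousOn (fun x : ℝ => (x-a)^p * (b-x)^(q+1)) (uIcc a b) :=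
    (cont_left a p hp _).mul (cont_right b (q+1) (by linarith) _)
  have hc2 : ContinuousOn (fun x : ℝ => (x-a)^(p+1) * (b-x)^q) (uIcc a b) :=
    (cont_left a (p+1) (by linarith) _).mul (cont_right b q hq _)
  have hL : IntervalIntegrable (fun x => (x-a)^p * (b-x)^q * f x) volume a b :=
    hint.continuousOn_mul ((cont_left a p hp _).mul (cont_right b q hq _))
  have hR1 : IntervalIntegrable (fun x => A/(b-a) * ((x-a)^p * (b-x)^(q+1))) volume a b :=
    (hc1.const_smul (A/(b-a))).intervalIntegrable
  have hR2 : IntervalIntegrable (fun x => (m*B/(b-a)) * ((x-a)^(p+1) * (b-x)^q)) volume a b :=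
    (hc2.const_smul (m*B/(b-a))).intervalIntegrable
  have hmono := intervalIntegral.integral_mono_on hab.le hL (hR1.add hR2) hpt
  rw [intervalIntegral.integral_add hR1 hR2, intervalIntegral.integral_const_mul,
    intervalIntegral.integral_const_mul,
    key a b p (q+1) hab hp (by linarith),
    key a b (p+1) q hab (by linarith) hq] at hmono
  refine hmono.trans (le_of_eq ?_)
  have e1 : q + 1 + 1 = q + 2 := by ring
  have e2 : p + 1 + 1 = p + 2 := by ring
  have e3 : p + (q+1) + 1 = (p+q+1) + 1 := by ring
  have e4 : (p+1) + q + 1 = (p+q+1) + 1 := by ring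
  rw [e1, e2, e3, e4, Real.rpow_add_one hba.ne']
  field_simp
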